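/- arXiv:2410.05504 — 2 statements merged into one kernel-verified Lean document; each statement's English description precedes it below -/
import Mathlib

section
/- Binary improvement theorem: Let σ* be an obedient experiment and let (σ̄, σ̲, λ) be a Pareto-ranked splitting of σ* with u_s(σ̄, τ*) > u_s(σ̲, τ*). Define the binary ambiguous experiment (σ, μ) with σ = (σ̄, σ̲) and μ̄ = λφ_r'(u_r(σ̲, τ*)) / [λφ_r'(u_r(σ̲, τ*)) + (1−λ)φ_r'(u_r(σ̄, τ*))]. Then: (i) (σ, μ) is obedient; (ii) U_r(σ, μ, τ*) > u_r(σ*, τ*) if and only if μ̄ > λ; (iii) U_s(σ, μ, τ*) > u_s(σ*, τ*) if and only if the sender's ((σ̄, σ̲), λ)-probability premium ρ^{φ_s,u_s}((σ̄, σ̲), λ) is strictly less than μ̄ − λ. Moreover, ρ^{φ_s,u_s}((σ̄, σ̲), λ) weakly increases when φ_s is replaced by φ◦φ_s for any strictly increasing, concave, differentiable φ, and μ̄ weakly increases when φ_r is replaced by φ◦φ_r for any strictly increasing, concave, differentiable φ. -/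
open Finset

/-- A stochastic kernel from `X` to `Y`: each row `k x` is a probability vector on `Y`.
An experiment is a kernel from states `Ω` to messages; a receiver strategy is a kernel
from messages to actions `A`. -/
def IsKernel {X Y : Type*} [Fintype Y] (k : X → Y → ℝ) : Prop :=
  (∀ x y, 0 ≤ k x y) ∧ ∀ x, ∑ y, k x y = 1

/-- A probability vector on a finite type. -/
def IsProb {Θ : Type*} [Fintype Θ] (μ : Θ → ℝ) : Prop :=
  (∀ θ, 0 ≤ μ θ) ∧ ∑ θ, μ θ = 1

/-- The obedient strategy `τ*`: take the recommended action with probability one. -/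
noncomputable def tauStar {A : Type*} [DecidableEq A] : A → A → ℝ :=
  fun m a => if a = m then (1 : ℝ) else 0

/-- Expected payoff `u_i(σ, τ) = ∑_{ω,m,a} p(ω) σ(m|ω) τ(a|m) u_i(a,ω)`. -/
noncomputable def expPayoff {Ω M A : Type*} [Fintype Ω] [Fintype M] [Fintype A]
    (p : Ω → ℝ) (u : A → Ω → ℝ) (σ : Ω → M → ℝ) (τ : M → A → ℝ) : ℝ :=
  ∑ ω, ∑ m, ∑ a, p ω * σ ω m * τ m a * u a ω

/-- Obedience of a single (unambiguous) canonical experiment: `τ*` is a best reply. -/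
def Obedient {Ω A : Type*} [Fintype Ω] [Fintype A] [DecidableEq A]
    (p : Ω → ℝ) (ur : A → Ω → ℝ) (σ : Ω → A → ℝ) : Prop :=
  ∀ τ : A → A → ℝ, IsKernel τ → expPayoff p ur σ τ ≤ expPayoff p ur σ tauStar

/-- Obedience of an ambiguous experiment `(σ, μ)` for a smooth-ambiguity receiver with
index `φr`:  `τ*` maximizes `τ ↦ U_r(σ, μ, τ) = φr⁻¹(∑_θ μ_θ φr(u_r(σ_θ, τ)))`; since `φr`
is strictly increasing this is equivalent to `τ*` maximizing `τ ↦ ∑_θ μ_θ φr(u_r(σ_θ, τ))`. -/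
def AmbObedient {Ω A Θ : Type*} [Fintype Ω] [Fintype A] [DecidableEq A] [Fintype Θ]
    (φr : ℝ → ℝ) (p : Ω → ℝ) (ur : A → Ω → ℝ) (σ : Θ → Ω → A → ℝ) (μ : Θ → ℝ) : Prop :=
  ∀ τ : A → A → ℝ, IsKernel τ →
    ∑ θ, μ θ * φr (expPayoff p ur (σ θ) τ) ≤ ∑ θ, μ θ * φr (expPayoff p ur (σ θ) tauStar)

/-- A smooth ambiguity index: strictly increasing, concave, differentiable. -/
def SmoothIndex (φ : ℝ → ℝ) : Prop :=
  StrictMono φ ∧ ConcaveOn ℝ Set.univ φ ∧ Differentiable ℝ φ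

/-- Two experiments are (strictly) Pareto ranked: under obedience, sender and receiver
strictly rank them the same way. -/
def ParetoRanked {Ω A : Type*} [Fintype Ω] [Fintype A] [DecidableEq A]
    (p : Ω → ℝ) (us ur : A → Ω → ℝ) (σ σ' : Ω → A → ℝ) : Prop :=
  (expPayoff p us σ' tauStar < expPayoff p us σ tauStar ∧
      expPayoff p ur σ' tauStar < expPayoff p ur σ tauStar) ∨
  (expPayoff p us σ tauStar < expPayoff p us σ' tauStar ∧
      expPayoff p ur σ tauStar < expPayoff p ur σ' tauStar)

/-- Two experiments are weakly Pareto ranked. -/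
def WeaklyParetoRanked {Ω A : Type*} [Fintype Ω] [Fintype A] [DecidableEq A]
    (p : Ω → ℝ) (us ur : A → Ω → ℝ) (σ σ' : Ω → A → ℝ) : Prop :=
  (expPayoff p us σ' tauStar ≤ expPayoff p us σ tauStar ∧
      expPayoff p ur σ' tauStar ≤ expPayoff p ur σ tauStar) ∨
  (expPayoff p us σ tauStar ≤ expPayoff p us σ' tauStar ∧
      expPayoff p ur σ tauStar ≤ expPayoff p ur σ' tauStar)

/-- Pointwise convex combination of two experiments. -/
noncomputable def mixExp {Ω A : Type*} (lam : ℝ) (σ1 σ2 : Ω → A → ℝ) : Ω → A → ℝ :=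
  fun ω a => lam * σ1 ω a + (1 - lam) * σ2 ω a

/-- `(σbar, σlo, lam)` is a Pareto-ranked splitting of the experiment `σ`. -/
def ParetoRankedSplitting {Ω A : Type*} [Fintype Ω] [Fintype A] [DecidableEq A]
    (p : Ω → ℝ) (us ur : A → Ω → ℝ) (σbar σlo : Ω → A → ℝ) (lam : ℝ) (σ : Ω → A → ℝ) : Prop :=
  IsKernel σbar ∧ IsKernel σlo ∧ lam ∈ Set.Ioo (0 : ℝ) 1 ∧
    mixExp lam σbar σlo = σ ∧ ParetoRanked p us ur σbar σlo

/-- The `((σbar, σlo), lam)`-probability premium of a player with utility `u` and index `φ`. -/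
noncomputable def probPremium {Ω A : Type*} [Fintype Ω] [Fintype A] [DecidableEq A]
    (p : Ω → ℝ) (u : A → Ω → ℝ) (φ : ℝ → ℝ) (σbar σlo : Ω → A → ℝ) (lam : ℝ) : ℝ :=
  (φ (expPayoff p u (mixExp lam σbar σlo) tauStar) -
      lam * φ (expPayoff p u σbar tauStar) - (1 - lam) * φ (expPayoff p u σlo tauStar)) /
    (φ (expPayoff p u σbar tauStar) - φ (expPayoff p u σlo tauStar))

/-- The set of `φs`-transformed sender values attainable by obedient ambiguous experiments;
the value of the sender's problem `(P)` equals `u` iff `φs u` is the least upper bound of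
this set (since `φs` is continuous and strictly increasing). -/
def senderValues {Ω A : Type*} [Fintype Ω] [Fintype A] [DecidableEq A]
    (φs φr : ℝ → ℝ) (p : Ω → ℝ) (us ur : A → Ω → ℝ) : Set ℝ :=
  {x | ∃ (n : ℕ) (σ : Fin n → Ω → A → ℝ) (μ : Fin n → ℝ),
    (∀ j, IsKernel (σ j)) ∧ IsProb μ ∧ AmbObedient φr p ur σ μ ∧
    x = ∑ j, μ j * φs (expPayoff p us (σ j) tauStar)}

/-- The set of feasible values of the auxiliary program `(Φ*(u))`: sums
`∑_θ λ_θ Φ_u(σ_θ)` over splittings `(λ_θ, σ_θ)` of obedient experiments, where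
`Φ_u(σ) = (φs(u_s(σ,τ*)) − φs(u)) / φr'(u_r(σ,τ*))`. -/
def phiProgram {Ω A : Type*} [Fintype Ω] [Fintype A] [DecidableEq A]
    (φs φr : ℝ → ℝ) (p : Ω → ℝ) (us ur : A → Ω → ℝ) (u : ℝ) : Set ℝ :=
  {x | ∃ (n : ℕ) (σ : Fin n → Ω → A → ℝ) (lam : Fin n → ℝ),
    (∀ j, IsKernel (σ j)) ∧ IsProb lam ∧
    Obedient p ur (fun ω a => ∑ j, lam j * σ j ω a) ∧
    x = ∑ j, lam j * ((φs (expPayoff p us (σ j) tauStar) - φs u) /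
      deriv φr (expPayoff p ur (σ j) tauStar))}

lemma tangent_le {φ : ℝ → ℝ} (hc : ConcaveOn ℝ Set.univ φ) (hd : Differentiable ℝ φ)
    (x y : ℝ) : φ y ≤ φ x + deriv φ x * (y - x) := by
  rcases lt_trichotomy x y with h | rfl | h
  · have h1 := hc.slope_le_deriv (Set.mem_univ x) (Set.mem_univ y) h (hd x)
    rw [slope_def_field] at h1
    have hyx : (0:ℝ) < y - x := by linarith
    rw [div_le_iff₀ hyx] at h1
    linarith
  · simp
  · have h1 := hc.deriv_le_slope (Set.mem_univ y) (Set.mem_univ x) h (hd x)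
    rw [slope_def_field] at h1
    have hxy : (0:ℝ) < x - y := by linarith
    rw [le_div_iff₀ hxy] at h1
    nlinarith

lemma deriv_anti {φ : ℝ → ℝ} (hc : ConcaveOn ℝ Set.univ φ) (hd : Differentiable ℝ φ)
    {x y : ℝ} (hxy : x ≤ y) : deriv φ y ≤ deriv φ x := by
  rcases eq_or_lt_of_le hxy with rfl | h
  · exact le_rfl
  · have h1 := tangent_le hc hd x y
    have h2 := tangent_le hc hd y x
    nlinarith

lemma deriv_pos_of_smooth {φ : ℝ → ℝ} (h : SmoothIndex φ) (x : ℝ) : 0 < deriv φ x := by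
  have ht := tangent_le h.2.1 h.2.2 x (x + 1)
  have hm := h.1 (show x < x + 1 by linarith)
  nlinarith

lemma deriv_eq_of_tangent_eq {φ : ℝ → ℝ} (hc : ConcaveOn ℝ Set.univ φ)
    (hd : Differentiable ℝ φ) {x m : ℝ}
    (heq : φ m = φ x + deriv φ x * (m - x)) : deriv φ m = deriv φ x := by
  set g : ℝ → ℝ := fun y => φ x + deriv φ x * (y - x) - φ y with hg
  have hgmin : IsLocalMin g m := by
    apply Filter.Eventually.of_forall
    intro y
    have := tangent_le hc hd x y
    simp only [hg]
    rw [← heq]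
    linarith
  have h1 : HasDerivAt (fun y : ℝ => φ x + deriv φ x * (y - x)) (deriv φ x) m := by
    simpa using (((hasDerivAt_id m).sub_const x).const_mul (deriv φ x)).const_add (φ x)
  have h2 : HasDerivAt g (deriv φ x - deriv φ m) m := h1.sub (hd m).hasDerivAt
  have h3 := hgmin.deriv_eq_zero
  rw [h2.deriv] at h3
  linarith

lemma expPayoff_mix {Ω M A : Type*} [Fintype Ω] [Fintype M] [Fintype A]
    (p : Ω → ℝ) (u : A → Ω → ℝ) (lam : ℝ) (σ1 σ2 : Ω → M → ℝ) (τ : M → A → ℝ) :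
    expPayoff p u (mixExp lam σ1 σ2) τ
      = lam * expPayoff p u σ1 τ + (1 - lam) * expPayoff p u σ2 τ := by
  simp only [expPayoff, mixExp, Finset.mul_sum, ← Finset.sum_add_distrib]
  refine Finset.sum_congr rfl fun ω _ => Finset.sum_congr rfl fun m _ =>
    Finset.sum_congr rfl fun a _ => ?_
  ring

set_option maxHeartbeats 1000000 in
/-- Theorem 4, binary improvement: let `σstar` be obedient and
`(σbar, σlo, lam)` a Pareto-ranked splitting of it with `u_s(σbar,τ*) > u_s(σlo,τ*)`, and
let `μbar = lam φr'(u_r(σlo,τ*)) / (lam φr'(u_r(σlo,τ*)) + (1−lam) φr'(u_r(σbar,τ*)))`.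
Then (i) the binary ambiguous experiment is obedient; (ii) the receiver strictly gains
over `σstar` iff `μbar > lam`; (iii) the sender strictly gains over `σstar` iff the
sender's probability premium is `< μbar − lam`; moreover the sender's probability premium
weakly increases under more sender ambiguity aversion (`φ ∘ φs`), and `μbar` weakly
increases under more receiver ambiguity aversion (`φ ∘ φr`).  (Strict payoff comparisons
involving `φ⁻¹` are stated equivalently through the strictly increasing `φs`, `φr`.) -/
theorem binary_improvement
    {Ω A : Type*} [Fintype Ω] [Fintype A] [DecidableEq A]
    (p : Ω → ℝ) (hp : IsProb p) (us ur : A → Ω → ℝ)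
    (φs φr : ℝ → ℝ) (hφs : SmoothIndex φs) (hφr : SmoothIndex φr)
    (σstar σbar σlo : Ω → A → ℝ) (lam : ℝ)
    (hσstar : IsKernel σstar) (hobed : Obedient p ur σstar)
    (hsplit : ParetoRankedSplitting p us ur σbar σlo lam σstar)
    (hs : expPayoff p us σlo tauStar < expPayoff p us σbar tauStar)
    (μbar : ℝ)
    (hμbar : μbar = lam * deriv φr (expPayoff p ur σlo tauStar) /
      (lam * deriv φr (expPayoff p ur σlo tauStar) +
        (1 - lam) * deriv φr (expPayoff p ur σbar tauStar))) :
    AmbObedient φr p ur (fun b : Bool => if b then σbar else σlo)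
        (fun b : Bool => if b then μbar else 1 - μbar) ∧
    (φr (expPayoff p ur σstar tauStar) <
        μbar * φr (expPayoff p ur σbar tauStar) + (1 - μbar) * φr (expPayoff p ur σlo tauStar)
      ↔ lam < μbar) ∧
    (φs (expPayoff p us σstar tauStar) <
        μbar * φs (expPayoff p us σbar tauStar) + (1 - μbar) * φs (expPayoff p us σlo tauStar)
      ↔ probPremium p us φs σbar σlo lam < μbar - lam) ∧
    (∀ φ : ℝ → ℝ, SmoothIndex φ →
      probPremium p us φs σbar σlo lam ≤ probPremium p us (φ ∘ φs) σbar σlo lam) ∧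
    (∀ φ : ℝ → ℝ, SmoothIndex φ →
      μbar ≤ lam * deriv (φ ∘ φr) (expPayoff p ur σlo tauStar) /
        (lam * deriv (φ ∘ φr) (expPayoff p ur σlo tauStar) +
          (1 - lam) * deriv (φ ∘ φr) (expPayoff p ur σbar tauStar))) := by
  obtain ⟨hkbar, hklo, hlamIoo, hmix, hpr⟩ := hsplit
  obtain ⟨hlam0, hlam1⟩ := hlamIoo
  have h1lam : (0:ℝ) < 1 - lam := by linarith
  set Rb := expPayoff p ur σbar tauStar with hRb
  set Rl := expPayoff p ur σlo tauStar with hRl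
  set Sb := expPayoff p us σbar tauStar with hSb
  set Sl := expPayoff p us σlo tauStar with hSl
  have hr : Rl < Rb := by
    rcases hpr with ⟨_, h⟩ | ⟨h, _⟩
    · exact h
    · exact absurd hs (not_lt.mpr h.le)
  have hmr : expPayoff p ur σstar tauStar = lam * Rb + (1 - lam) * Rl := by
    rw [← hmix, expPayoff_mix]
  have hms : expPayoff p us σstar tauStar = lam * Sb + (1 - lam) * Sl := by
    rw [← hmix, expPayoff_mix]
  have hdl : 0 < deriv φr Rl := deriv_pos_of_smooth hφr Rl
  have hdb : 0 < deriv φr Rb := deriv_pos_of_smooth hφr Rb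
  have hdbl : deriv φr Rb ≤ deriv φr Rl := deriv_anti hφr.2.1 hφr.2.2 hr.le
  have hD : 0 < lam * deriv φr Rl + (1 - lam) * deriv φr Rb :=
    add_pos (mul_pos hlam0 hdl) (mul_pos h1lam hdb)
  have hμ0 : 0 ≤ μbar := by
    rw [hμbar]; exact div_nonneg (mul_pos hlam0 hdl).le hD.le
  have hμ1 : μbar ≤ 1 := by
    rw [hμbar, div_le_one hD]; nlinarith
  have hφRlb : φr Rl < φr Rb := hφr.1 hr
  refine ⟨?_, ?_, ?_, ?_, ?_⟩
  · -- (i) obedience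
    intro τ hτ
    simp only [Fintype.sum_bool, if_true, Bool.false_eq_true, if_false]
    rw [← hRb, ← hRl]
    have hob := hobed τ hτ
    rw [← hmix, expPayoff_mix, expPayoff_mix, ← hRb, ← hRl] at hob
    set Eb := expPayoff p ur σbar τ with hEb
    set El := expPayoff p ur σlo τ with hEl
    have T1 : φr Eb ≤ φr Rb + deriv φr Rb * (Eb - Rb) := tangent_le hφr.2.1 hφr.2.2 Rb Eb
    have T2 : φr El ≤ φr Rl + deriv φr Rl * (El - Rl) := tangent_le hφr.2.1 hφr.2.2 Rl El
    have h3 : μbar * (lam * deriv φr Rl + (1 - lam) * deriv φr Rb) = lam * deriv φr Rl := by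
      rw [hμbar]; field_simp
    have h4 : (1 - μbar) * (lam * deriv φr Rl + (1 - lam) * deriv φr Rb)
        = (1 - lam) * deriv φr Rb := by
      linear_combination (-1 : ℝ) * h3
    have h1 : μbar * φr Eb ≤ μbar * (φr Rb + deriv φr Rb * (Eb - Rb)) :=
      mul_le_mul_of_nonneg_left T1 hμ0
    have h2 : (1 - μbar) * φr El ≤ (1 - μbar) * (φr Rl + deriv φr Rl * (El - Rl)) :=
      mul_le_mul_of_nonneg_left T2 (by linarith)
    have h5 : lam * (Eb - Rb) + (1 - lam) * (El - Rl) ≤ 0 := by linarith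
    have h6 : (lam * deriv φr Rl + (1 - lam) * deriv φr Rb) *
        (μbar * (deriv φr Rb * (Eb - Rb)) + (1 - μbar) * (deriv φr Rl * (El - Rl)))
        = deriv φr Rl * deriv φr Rb * (lam * (Eb - Rb) + (1 - lam) * (El - Rl)) := by
      linear_combination (deriv φr Rb * (Eb - Rb)) * h3 + (deriv φr Rl * (El - Rl)) * h4
    have h7 : (lam * deriv φr Rl + (1 - lam) * deriv φr Rb) *
        (μbar * (deriv φr Rb * (Eb - Rb)) + (1 - μbar) * (deriv φr Rl * (El - Rl))) ≤ 0 := by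
      rw [h6]
      exact mul_nonpos_of_nonneg_of_nonpos (by positivity) h5
    have h8 : μbar * (deriv φr Rb * (Eb - Rb)) + (1 - μbar) * (deriv φr Rl * (El - Rl)) ≤ 0 := by
      nlinarith [h7, hD]
    linarith [h1, h2, h8]
  · -- (ii)
    rw [hmr]
    have conc := hφr.2.1.2 (Set.mem_univ Rb) (Set.mem_univ Rl) hlam0.le h1lam.le
      (by ring : lam + (1 - lam) = 1)
    simp only [smul_eq_mul] at conc
    constructor
    · intro h
      by_contra hc
      push_neg at hc
      nlinarith [lt_of_le_of_lt conc h]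
    · intro hlt
      have hdd : deriv φr Rb < deriv φr Rl := by
        by_contra hcon
        push_neg at hcon
        rw [hμbar, lt_div_iff₀ hD] at hlt
        nlinarith [mul_nonneg (mul_pos hlam0 h1lam).le (sub_nonneg.mpr hcon)]
      have A1 : φr (lam * Rb + (1 - lam) * Rl)
          ≤ φr Rl + deriv φr Rl * ((lam * Rb + (1 - lam) * Rl) - Rl) :=
        tangent_le hφr.2.1 hφr.2.2 Rl _
      have A2 : φr (lam * Rb + (1 - lam) * Rl)
          ≤ φr Rb + deriv φr Rb * ((lam * Rb + (1 - lam) * Rl) - Rb) :=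
        tangent_le hφr.2.1 hφr.2.2 Rb _
      have hrepr : μbar * φr Rb + (1 - μbar) * φr Rl
          = (lam * deriv φr Rl * φr Rb + (1 - lam) * deriv φr Rb * φr Rl)
            / (lam * deriv φr Rl + (1 - lam) * deriv φr Rb) := by
        rw [hμbar]; field_simp; ring
      rw [hrepr, lt_div_iff₀ hD]
      rcases A1.lt_or_eq with A1s | A1e
      · have B1 : ((1 - lam) * deriv φr Rb) * (φr (lam * Rb + (1 - lam) * Rl) - φr Rl)
            < ((1 - lam) * deriv φr Rb) * (deriv φr Rl * ((lam * Rb + (1 - lam) * Rl) - Rl)) :=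
          mul_lt_mul_of_pos_left (by linarith) (mul_pos h1lam hdb)
        have B2 : (lam * deriv φr Rl) * (deriv φr Rb * (Rb - (lam * Rb + (1 - lam) * Rl)))
            ≤ (lam * deriv φr Rl) * (φr Rb - φr (lam * Rb + (1 - lam) * Rl)) :=
          mul_le_mul_of_nonneg_left (by linarith) (mul_pos hlam0 hdl).le
        nlinarith [B1, B2]
      · have hdm1 : deriv φr (lam * Rb + (1 - lam) * Rl) = deriv φr Rl :=
          deriv_eq_of_tangent_eq hφr.2.1 hφr.2.2 A1e
        rcases A2.lt_or_eq with A2s | A2e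
        · have B1 : ((1 - lam) * deriv φr Rb) * (φr (lam * Rb + (1 - lam) * Rl) - φr Rl)
              ≤ ((1 - lam) * deriv φr Rb) * (deriv φr Rl * ((lam * Rb + (1 - lam) * Rl) - Rl)) :=
            mul_le_mul_of_nonneg_left (by linarith) (mul_pos h1lam hdb).le
          have B2 : (lam * deriv φr Rl) * (deriv φr Rb * (Rb - (lam * Rb + (1 - lam) * Rl)))
              < (lam * deriv φr Rl) * (φr Rb - φr (lam * Rb + (1 - lam) * Rl)) :=
            mul_lt_mul_of_pos_left (by linarith) (mul_pos hlam0 hdl)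
          nlinarith [B1, B2]
        · have hdm2 : deriv φr (lam * Rb + (1 - lam) * Rl) = deriv φr Rb :=
            deriv_eq_of_tangent_eq hφr.2.1 hφr.2.2 A2e
          exfalso
          rw [hdm1] at hdm2
          linarith
  · -- (iii)
    simp only [probPremium, hmix]
    rw [← hSb, ← hSl]
    have hds : 0 < φs Sb - φs Sl := sub_pos.mpr (hφs.1 hs)
    rw [div_lt_iff₀ hds, hms]
    constructor <;> intro h <;> nlinarith
  · -- (iv)
    intro φ hφ
    have hval : expPayoff p us (mixExp lam σbar σlo) tauStar = lam * Sb + (1 - lam) * Sl :=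
      expPayoff_mix p us lam σbar σlo tauStar
    simp only [probPremium, Function.comp_apply, hval]
    rw [← hSb, ← hSl]
    have hba : φs Sl < φs Sb := hφs.1 hs
    have hmb : φs Sl < φs (lam * Sb + (1 - lam) * Sl) := hφs.1 (by nlinarith)
    have hma : φs (lam * Sb + (1 - lam) * Sl) < φs Sb := hφs.1 (by nlinarith)
    set a := φs Sb
    set b := φs Sl
    set m := φs (lam * Sb + (1 - lam) * Sl) with hm
    set t := (m - b) / (a - b) with ht
    have hab : (0:ℝ) < a - b := by linarith
    have ht0 : 0 ≤ t := div_nonneg (by linarith) hab.le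
    have ht1 : t ≤ 1 := by rw [ht, div_le_one hab]; linarith
    have hcomb : t * a + (1 - t) * b = m := by rw [ht]; field_simp; ring
    have conc := hφ.2.1.2 (Set.mem_univ a) (Set.mem_univ b) ht0 (by linarith) (by ring :
      t + (1 - t) = 1)
    simp only [smul_eq_mul] at conc
    rw [hcomb] at conc
    have hφab : φ b < φ a := hφ.1 (by linarith)
    have hL : (m - lam * a - (1 - lam) * b) / (a - b) = t - lam := by
      rw [ht]; field_simp; ring
    rw [hL, le_div_iff₀ (by linarith : (0:ℝ) < φ a - φ b)]
    nlinarith [conc]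
  · -- (v)
    intro φ hφ
    have hderiv : ∀ x : ℝ, deriv (φ ∘ φr) x = deriv φ (φr x) * deriv φr x := fun x =>
      deriv_comp x (hφ.2.2 _) (hφr.2.2 x)
    rw [hderiv, hderiv, hμbar]
    have hcl : 0 < deriv φ (φr Rl) := deriv_pos_of_smooth hφ (φr Rl)
    have hcb : 0 < deriv φ (φr Rb) := deriv_pos_of_smooth hφ (φr Rb)
    have hcc : deriv φ (φr Rb) ≤ deriv φ (φr Rl) :=
      deriv_anti hφ.2.1 hφ.2.2 (hφr.1 hr).le
    have hD2 : 0 < lam * (deriv φ (φr Rl) * deriv φr Rl)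
        + (1 - lam) * (deriv φ (φr Rb) * deriv φr Rb) :=
      add_pos (mul_pos hlam0 (mul_pos hcl hdl)) (mul_pos h1lam (mul_pos hcb hdb))
    rw [div_le_div_iff₀ hD hD2]
    nlinarith [mul_nonneg (mul_nonneg (mul_pos hlam0 h1lam).le (mul_pos hdl hdb).le)
      (sub_nonneg.mpr hcc)]
end

section
/- Single-crossing of Φ*: Define Φ*(u) as the supremum of Σ_θ λ_θ Φ_u(σ_θ) over finite families (λ_θ, σ_θ) with λ_θ ≥ 0, Σ_θ λ_θ = 1, each σ_θ an experiment, and Σ_θ λ_θ σ_θ obedient, where Φ_u(σ) := (φ_s(u_s(σ,τ*)) − φ_s(u)) / φ_r'(u_r(σ,τ*)). Then Φ* satisfies single-crossing: for any u > u', if Φ*(u) ≥ 0 then Φ*(u') > 0. Consequently, there exists a unique u ∈ ℝ such that Φ*(u) = 0. -/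
open Finset

section Aux

variable {Ω A : Type*} [Fintype Ω] [Fintype A] [DecidableEq A]

lemma expPayoff_tauStar_eq (p : Ω → ℝ) (u : A → Ω → ℝ) (σ : Ω → A → ℝ) :
    expPayoff p u σ tauStar = ∑ ω, ∑ m, p ω * σ ω m * u m ω := by
  unfold expPayoff tauStar
  refine Finset.sum_congr rfl fun ω _ => Finset.sum_congr rfl fun m _ => ?_
  rw [Finset.sum_eq_single m]
  · simp
  · intro a _ ha
    simp [ha]
  · intro h
    exact absurd (Finset.mem_univ m) h

lemma expPayoff_tauStar_le {p : Ω → ℝ} (hp : IsProb p) (u : A → Ω → ℝ)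
    {σ : Ω → A → ℝ} (hσ : IsKernel σ) {C : ℝ} (hC : ∀ a ω, u a ω ≤ C) :
    expPayoff p u σ tauStar ≤ C := by
  rw [expPayoff_tauStar_eq]
  have h1 : ∀ ω ∈ (Finset.univ : Finset Ω), ∑ m, p ω * σ ω m * u m ω ≤ p ω * C := by
    intro ω _
    calc ∑ m, p ω * σ ω m * u m ω ≤ ∑ m, p ω * σ ω m * C :=
          Finset.sum_le_sum fun m _ =>
            mul_le_mul_of_nonneg_left (hC m ω) (mul_nonneg (hp.1 ω) (hσ.1 ω m))
      _ = (∑ m, σ ω m) * (p ω * C) := by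
          rw [Finset.sum_mul]
          exact Finset.sum_congr rfl fun m _ => by ring
      _ = p ω * C := by rw [hσ.2 ω, one_mul]
  calc ∑ ω, ∑ m, p ω * σ ω m * u m ω ≤ ∑ ω, p ω * C := Finset.sum_le_sum h1
    _ = (∑ ω, p ω) * C := by rw [Finset.sum_mul]
    _ = C := by rw [hp.2, one_mul]

lemma le_expPayoff_tauStar {p : Ω → ℝ} (hp : IsProb p) (u : A → Ω → ℝ)
    {σ : Ω → A → ℝ} (hσ : IsKernel σ) {C : ℝ} (hC : ∀ a ω, C ≤ u a ω) :
    C ≤ expPayoff p u σ tauStar := by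
  have h := expPayoff_tauStar_le hp (fun a ω => -u a ω) hσ (C := -C)
    (fun a ω => neg_le_neg (hC a ω))
  have hneg : expPayoff p (fun a ω => -u a ω) σ tauStar = -expPayoff p u σ tauStar := by
    rw [expPayoff_tauStar_eq, expPayoff_tauStar_eq]
    rw [← Finset.sum_neg_distrib]
    refine Finset.sum_congr rfl fun ω _ => ?_
    rw [← Finset.sum_neg_distrib]
    exact Finset.sum_congr rfl fun m _ => by ring
  rw [hneg] at h
  linarith

lemma exists_obedient [Nonempty Ω] [Nonempty A] (p : Ω → ℝ) (hp : IsProb p)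
    (ur : A → Ω → ℝ) : ∃ σ0 : Ω → A → ℝ, IsKernel σ0 ∧ Obedient p ur σ0 := by
  obtain ⟨astar, -, hastar⟩ := Finset.exists_max_image (Finset.univ : Finset A)
    (fun a => ∑ ω, p ω * ur a ω) Finset.univ_nonempty
  refine ⟨fun _ a => if a = astar then 1 else 0,
    ⟨fun ω a => by dsimp only; split <;> norm_num, fun ω => by simp⟩, ?_⟩
  intro τ hτ
  have hR : expPayoff p ur (fun _ a => if a = astar then 1 else 0) tauStar
      = ∑ ω, p ω * ur astar ω := by
    rw [expPayoff_tauStar_eq]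
    refine Finset.sum_congr rfl fun ω _ => ?_
    rw [Finset.sum_eq_single astar]
    · simp
    · intro a _ ha; simp [ha]
    · intro h; exact absurd (Finset.mem_univ astar) h
  have hL : expPayoff p ur (fun _ a => if a = astar then 1 else 0) τ
      = ∑ a, τ astar a * ∑ ω, p ω * ur a ω := by
    unfold expPayoff
    have h1 : ∀ ω : Ω, (∑ m, ∑ a, p ω * (if m = astar then (1:ℝ) else 0) * τ m a * ur a ω)
        = ∑ a, p ω * τ astar a * ur a ω := by
      intro ω
      rw [Finset.sum_eq_single astar]
      · simp
      · intro m _ hm; simp [hm]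
      · intro h; exact absurd (Finset.mem_univ astar) h
    calc ∑ ω, ∑ m, ∑ a, p ω * (if m = astar then (1:ℝ) else 0) * τ m a * ur a ω
        = ∑ ω, ∑ a, p ω * τ astar a * ur a ω :=
          Finset.sum_congr rfl fun ω _ => h1 ω
      _ = ∑ a, ∑ ω, p ω * τ astar a * ur a ω := Finset.sum_comm
      _ = ∑ a, τ astar a * ∑ ω, p ω * ur a ω := Finset.sum_congr rfl fun a _ => by
            rw [Finset.mul_sum]
            exact Finset.sum_congr rfl fun ω _ => by ring
  rw [hL, hR]
  calc ∑ a, τ astar a * ∑ ω, p ω * ur a ω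
      ≤ ∑ a, τ astar a * ∑ ω, p ω * ur astar ω :=
        Finset.sum_le_sum fun a _ =>
          mul_le_mul_of_nonneg_left (hastar a (Finset.mem_univ a)) (hτ.1 astar a)
    _ = (∑ a, τ astar a) * ∑ ω, p ω * ur astar ω := by rw [Finset.sum_mul]
    _ = ∑ ω, p ω * ur astar ω := by rw [hτ.2 astar, one_mul]

end Aux

/-- Lemma A.1, single-crossing of `Φ*`: for `u' < u`, if the value of the
program `(Φ*(u))` is `≥ 0` then the value of `(Φ*(u'))` is `> 0` (values stated as least
upper bounds of the feasible sets); consequently there is a unique `u` with `Φ*(u) = 0`. -/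
theorem phiStar_single_crossing
    {Ω A : Type*} [Fintype Ω] [Fintype A] [DecidableEq A] [Nonempty Ω] [Nonempty A]
    (p : Ω → ℝ) (hp : IsProb p) (us ur : A → Ω → ℝ)
    (φs φr : ℝ → ℝ) (hφs : SmoothIndex φs) (hφr : SmoothIndex φr)
    (hφr' : ∀ x, 0 < deriv φr x) :
    (∀ u u' v v' : ℝ, u' < u →
      IsLUB (phiProgram φs φr p us ur u) v → IsLUB (phiProgram φs φr p us ur u') v' →
      0 ≤ v → 0 < v') ∧
    ∃! u : ℝ, IsLUB (phiProgram φs φr p us ur u) 0 := by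
  obtain ⟨hφs_mono, hφs_conc, hφs_diff⟩ := hφs
  obtain ⟨hφr_mono, hφr_conc, hφr_diff⟩ := hφr
  obtain ⟨q, -, hq⟩ := Finset.exists_max_image (Finset.univ : Finset (A × Ω))
    (fun q => us q.1 q.2) Finset.univ_nonempty
  set Ms : ℝ := us q.1 q.2 with hMsdef
  have hMs : ∀ a ω, us a ω ≤ Ms := fun a ω => hq (a, ω) (Finset.mem_univ _)
  obtain ⟨r, -, hr⟩ := Finset.exists_max_image (Finset.univ : Finset (A × Ω))
    (fun q => ur q.1 q.2) Finset.univ_nonempty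
  set Mr : ℝ := ur r.1 r.2 with hMrdef
  have hMr : ∀ a ω, ur a ω ≤ Mr := fun a ω => hr (a, ω) (Finset.mem_univ _)
  obtain ⟨r', -, hr'⟩ := Finset.exists_min_image (Finset.univ : Finset (A × Ω))
    (fun q => ur q.1 q.2) Finset.univ_nonempty
  set mr : ℝ := ur r'.1 r'.2 with hmrdef
  have hmr : ∀ a ω, mr ≤ ur a ω := fun a ω => hr' (a, ω) (Finset.mem_univ _)
  set Dlo := deriv φr Mr with hDlodef
  set Dhi := deriv φr mr with hDhidef
  have hDlo_pos : 0 < Dlo := hφr' Mr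
  have hDhi_pos : 0 < Dhi := hφr' mr
  have hanti : AntitoneOn (deriv φr) Set.univ :=
    hφr_conc.antitoneOn_deriv (fun x _ => hφr_diff x)
  set P : ℝ → Set ℝ := fun u => phiProgram φs φr p us ur u with hPdef
  have hd_mem : ∀ σ : Ω → A → ℝ, IsKernel σ →
      Dlo ≤ deriv φr (expPayoff p ur σ tauStar) ∧ deriv φr (expPayoff p ur σ tauStar) ≤ Dhi := by
    intro σ hσ
    exact ⟨hanti (Set.mem_univ _) (Set.mem_univ _) (expPayoff_tauStar_le hp ur hσ hMr),
      hanti (Set.mem_univ _) (Set.mem_univ _) (le_expPayoff_tauStar hp ur hσ hmr)⟩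
  -- the shift lemma
  have hshift : ∀ u u' x : ℝ, x ∈ P u → ∃ S : ℝ,
      1 / Dhi ≤ S ∧ S ≤ 1 / Dlo ∧ x + (φs u - φs u') * S ∈ P u' := by
    intro u u' x hx
    obtain ⟨n, σ, lam, hk, hl, hob, hxv⟩ := hx
    set d : Fin n → ℝ := fun j => deriv φr (expPayoff p ur (σ j) tauStar) with hddef
    have hdpos : ∀ j, 0 < d j := fun j => hφr' _
    have hdb : ∀ j, Dlo ≤ d j ∧ d j ≤ Dhi := fun j => hd_mem (σ j) (hk j)
    refine ⟨∑ j, lam j * (1 / d j), ?_, ?_, ?_⟩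
    · calc (1:ℝ)/Dhi = (∑ j, lam j) * (1/Dhi) := by rw [hl.2, one_mul]
        _ = ∑ j, lam j * (1/Dhi) := Finset.sum_mul _ _ _
        _ ≤ ∑ j, lam j * (1 / d j) := Finset.sum_le_sum fun j _ =>
            mul_le_mul_of_nonneg_left (one_div_le_one_div_of_le (hdpos j) (hdb j).2) (hl.1 j)
    · calc (∑ j, lam j * (1 / d j)) ≤ ∑ j, lam j * (1/Dlo) :=
            Finset.sum_le_sum fun j _ =>
              mul_le_mul_of_nonneg_left (one_div_le_one_div_of_le hDlo_pos (hdb j).1) (hl.1 j)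
        _ = (∑ j, lam j) * (1/Dlo) := (Finset.sum_mul _ _ _).symm
        _ = 1/Dlo := by rw [hl.2, one_mul]
    · refine ⟨n, σ, lam, hk, hl, hob, ?_⟩
      rw [hxv, Finset.mul_sum, ← Finset.sum_add_distrib]
      refine Finset.sum_congr rfl fun j _ => ?_
      have hj : d j ≠ 0 := (hdpos j).ne'
      show lam j * ((φs (expPayoff p us (σ j) tauStar) - φs u) / d j)
          + (φs u - φs u') * (lam j * (1 / d j))
        = lam j * ((φs (expPayoff p us (σ j) tauStar) - φs u') / d j)
      field_simp
      ring
  obtain ⟨σ0, hσ0k, hσ0ob⟩ := exists_obedient p hp ur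
  set us0 := expPayoff p us σ0 tauStar with hus0def
  have htriv : ∀ u : ℝ,
      ((φs us0 - φs u) / deriv φr (expPayoff p ur σ0 tauStar)) ∈ P u := by
    intro u
    refine ⟨1, fun _ => σ0, fun _ => 1, fun _ => hσ0k,
      ⟨fun _ => zero_le_one, by simp⟩, ?_, by simp [hus0def]⟩
    convert hσ0ob using 1
    funext ω a
    simp
  have hne : ∀ u : ℝ, (P u).Nonempty := fun u => ⟨_, htriv u⟩
  have hub : ∀ u : ℝ, ∀ x ∈ P u, x ≤ max 0 ((φs Ms - φs u) / Dlo) := by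
    intro u x hx
    obtain ⟨n, σ, lam, hk, hl, hob, hxv⟩ := hx
    rw [hxv]
    have hterm : ∀ j, (φs (expPayoff p us (σ j) tauStar) - φs u) /
        deriv φr (expPayoff p ur (σ j) tauStar) ≤ max 0 ((φs Ms - φs u) / Dlo) := by
      intro j
      set e := φs (expPayoff p us (σ j) tauStar) - φs u with hedef
      set dj := deriv φr (expPayoff p ur (σ j) tauStar) with hdjdef
      have hdjpos : 0 < dj := hφr' _
      have hdjlo : Dlo ≤ dj := (hd_mem (σ j) (hk j)).1
      have heMs : e ≤ φs Ms - φs u :=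
        sub_le_sub_right (hφs_mono.monotone (expPayoff_tauStar_le hp us (hk j) hMs)) _
      rcases le_or_gt e 0 with h | h
      · exact le_trans (div_nonpos_of_nonpos_of_nonneg h hdjpos.le) (le_max_left _ _)
      · calc e / dj = e * (1/dj) := by rw [mul_one_div]
          _ ≤ e * (1/Dlo) :=
              mul_le_mul_of_nonneg_left (one_div_le_one_div_of_le hDlo_pos hdjlo) h.le
          _ ≤ (φs Ms - φs u) * (1/Dlo) :=
              mul_le_mul_of_nonneg_right heMs (by positivity)
          _ = (φs Ms - φs u) / Dlo := (mul_one_div _ _)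
          _ ≤ max 0 ((φs Ms - φs u) / Dlo) := le_max_right _ _
    calc ∑ j, lam j * ((φs (expPayoff p us (σ j) tauStar) - φs u) /
          deriv φr (expPayoff p ur (σ j) tauStar))
        ≤ ∑ j, lam j * max 0 ((φs Ms - φs u) / Dlo) :=
          Finset.sum_le_sum fun j _ => mul_le_mul_of_nonneg_left (hterm j) (hl.1 j)
      _ = (∑ j, lam j) * max 0 ((φs Ms - φs u) / Dlo) := (Finset.sum_mul _ _ _).symm
      _ = max 0 ((φs Ms - φs u) / Dlo) := by rw [hl.2, one_mul]
  have hbdd : ∀ u : ℝ, BddAbove (P u) := fun u => ⟨_, fun x hx => hub u x hx⟩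
  set F : ℝ → ℝ := fun u => sSup (P u) with hFdef
  have hlub : ∀ u, IsLUB (P u) (F u) := fun u => isLUB_csSup (hne u) (hbdd u)
  -- single crossing
  have hSC : ∀ u u' v v' : ℝ, u' < u → IsLUB (P u) v → IsLUB (P u') v' → 0 ≤ v → 0 < v' := by
    intro u u' v v' hlt hv hv' hv0
    have hΔ : 0 < φs u - φs u' := sub_pos.mpr (hφs_mono hlt)
    have hδ : 0 < (φs u - φs u') * (1/Dhi) := by positivity
    obtain ⟨x, hxmem, hxgt, -⟩ :=
      hv.exists_between (show v - (φs u - φs u') * (1/Dhi) / 2 < v by linarith)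
    obtain ⟨S, hS1, hS2, hmem⟩ := hshift u u' x hxmem
    have hx' : x + (φs u - φs u') * S ≤ v' := hv'.1 hmem
    have hSd : (φs u - φs u') * (1/Dhi) ≤ (φs u - φs u') * S :=
      mul_le_mul_of_nonneg_left hS1 hΔ.le
    linarith
  refine ⟨hSC, ?_⟩
  -- monotonicity and Lipschitz bounds for F
  have hkey : ∀ u u' : ℝ, u' ≤ u → F u ≤ F u' ∧ F u' ≤ F u + (φs u - φs u') * (1/Dlo) := by
    intro u u' hle
    have hΔ : 0 ≤ φs u - φs u' := sub_nonneg.mpr (hφs_mono.monotone hle)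
    constructor
    · refine csSup_le (hne u) fun x hx => ?_
      obtain ⟨S, hS1, hS2, hmem⟩ := hshift u u' x hx
      have hS0 : (0:ℝ) ≤ S := le_trans (by positivity) hS1
      have h1 : x + (φs u - φs u') * S ≤ F u' := le_csSup (hbdd u') hmem
      nlinarith
    · refine csSup_le (hne u') fun x' hx' => ?_
      obtain ⟨S, hS1, hS2, hmem⟩ := hshift u' u x' hx'
      have h1 : x' + (φs u' - φs u) * S ≤ F u := le_csSup (hbdd u) hmem
      have h2 : (φs u - φs u') * S ≤ (φs u - φs u') * (1/Dlo) :=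
        mul_le_mul_of_nonneg_left hS2 hΔ
      have h3 : (φs u' - φs u) * S = -((φs u - φs u') * S) := by ring
      rw [h3] at h1
      linarith
  have hdist : ∀ u u' : ℝ, |F u - F u'| ≤ |φs u - φs u'| * (1/Dlo) := by
    intro u u'
    rcases le_total u' u with h | h
    · obtain ⟨ha, hb⟩ := hkey u u' h
      have hΔ : 0 ≤ φs u - φs u' := sub_nonneg.mpr (hφs_mono.monotone h)
      rw [abs_of_nonpos (by linarith), abs_of_nonneg hΔ]
      linarith
    · obtain ⟨ha, hb⟩ := hkey u' u h
      have hΔ : 0 ≤ φs u' - φs u := sub_nonneg.mpr (hφs_mono.monotone h)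
      rw [abs_of_nonneg (by linarith), abs_of_nonpos (by linarith)]
      linarith
  have hcont : Continuous F := by
    rw [continuous_iff_continuousAt]
    intro u₀
    rw [Metric.continuousAt_iff]
    intro ε hε
    obtain ⟨δ, hδpos, hδ⟩ := Metric.continuousAt_iff.mp
      (hφs_diff.continuous.continuousAt) (ε * Dlo) (by positivity)
    refine ⟨δ, hδpos, fun {u} hu => ?_⟩
    have h1 := hδ hu
    rw [Real.dist_eq] at h1 ⊢
    have h2 := hdist u u₀
    have h3 : |φs u - φs u₀| * (1/Dlo) < (ε * Dlo) * (1/Dlo) :=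
      mul_lt_mul_of_pos_right h1 (by positivity)
    have h4 : (ε * Dlo) * (1/Dlo) = ε := by field_simp
    linarith
  -- endpoints for IVT
  have h0mem : (0:ℝ) ∈ P us0 := by
    have := htriv us0
    simpa using this
  have hFus0 : 0 ≤ F us0 := le_csSup (hbdd us0) h0mem
  have hus0le : us0 ≤ Ms := expPayoff_tauStar_le hp us hσ0k hMs
  have hFMs : F Ms ≤ 0 := by
    refine csSup_le (hne Ms) fun x hx => ?_
    obtain ⟨n, σ, lam, hk, hl, hob, hxv⟩ := hx
    rw [hxv]
    refine Finset.sum_nonpos fun j _ => mul_nonpos_iff.mpr (Or.inl ⟨hl.1 j, ?_⟩)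
    exact div_nonpos_of_nonpos_of_nonneg
      (sub_nonpos.mpr (hφs_mono.monotone (expPayoff_tauStar_le hp us (hk j) hMs)))
      (hφr' _).le
  obtain ⟨ustar, -, hustar⟩ :=
    intermediate_value_Icc' hus0le hcont.continuousOn ⟨hFMs, hFus0⟩
  have hL0 : IsLUB (P ustar) 0 := by
    rw [← hustar]
    exact hlub ustar
  refine ⟨ustar, hL0, ?_⟩
  intro y hy
  rcases lt_trichotomy y ustar with h | h | h
  · exact absurd (hSC ustar y 0 0 h hL0 hy le_rfl) (lt_irrefl 0)
  · exact h
  · exact absurd (hSC y ustar 0 0 h hy hL0 le_rfl) (lt_irrefl 0)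
end
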